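/- Let k ≥ 0 be an integer. Suppose a, b, c are distinct integers in {0, ..., k} and there exist nonzero integers λ, μ with λ·(a,b,c) + μ·(1,1,1) = (1,-1,0), and nonzero integers λ', μ' with λ'·(a,b,c) + μ'·(1,1,1) = (0,k,1). Then k = 2. -/
import Mathlib

/-- Self-duality for `Tot(O(-k))` over `ℙ¹`: if `a, b, c` are distinct integers in
`{0, …, k}` and there exist nonzero integers `λ, μ` with
`λ·(a,b,c) + μ·(1,1,1) = (1,-1,0)` and nonzero integers `λ', μ'` with
`λ'·(a,b,c) + μ'·(1,1,1) = (0,k,1)`, then `k = 2`. -/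
theorem stmt0 (k a b c : ℤ) (hk : 0 ≤ k)
    (hab : a ≠ b) (hac : a ≠ c) (hbc : b ≠ c)
    (ha : 0 ≤ a ∧ a ≤ k) (hb : 0 ≤ b ∧ b ≤ k) (hc : 0 ≤ c ∧ c ≤ k)
    (h1 : ∃ l m : ℤ, l ≠ 0 ∧ m ≠ 0 ∧
      l * a + m * 1 = 1 ∧ l * b + m * 1 = -1 ∧ l * c + m * 1 = 0)
    (h2 : ∃ l' m' : ℤ, l' ≠ 0 ∧ m' ≠ 0 ∧
      l' * a + m' * 1 = 0 ∧ l' * b + m' * 1 = k ∧ l' * c + m' * 1 = 1) :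
    k = 2 := by
  obtain ⟨l, m, _, _, e1, e2, e3⟩ := h1
  obtain ⟨l', m', _, _, f1, f2, f3⟩ := h2
  have g1 : l * (a - c) = 1 := by linarith [e1, e3, mul_sub l a c]
  have g2 : l * (b - c) = -1 := by linarith [e2, e3, mul_sub l b c]
  have g3 : l' * (a - c) = -1 := by linarith [f1, f3, mul_sub l' a c]
  have g4 : l' * (b - c) = k - 1 := by linarith [f2, f3, mul_sub l' b c]
  have key : (l * (a - c)) * (l' * (b - c)) = (l * (b - c)) * (l' * (a - c)) := by ring
  rw [g1, g2, g3, g4] at key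
  linarith
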